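/- For any p' > p > 1, letting q = (exp(V(p) − V(p')) − 1)/p, one has q − (Q(p) − Q(p')) ≥ p·q − (V(p) − V(p')) ≥ 0, where V(p) = p·ln(p²/(p²−1)) and Q(p) = ∫_p^∞ (−V'(v)/v) dv. -/

import Mathlib

open Real Set MeasureTheory

noncomputable def V (p : ℝ) : ℝ := p * Real.log (p ^ 2 / (p ^ 2 - 1))

noncomputable def Q (p : ℝ) : ℝ := ∫ v in Set.Ioi p, -(deriv V v) / v

noncomputable def hV (v : ℝ) : ℝ := 2/(v^2-1) - Real.log (v^2/(v^2-1))



lemma hasDerivAt_V {v : ℝ} (hv : 1 < v) : HasDerivAt V (-hV v) v := by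
  have h1 : (0:ℝ) < v^2 - 1 := by nlinarith
  have h0 : (0:ℝ) < v := by linarith
  have hv2 : (0:ℝ) < v^2 := by positivity
  have dsq : HasDerivAt (fun x : ℝ => x^2) (2*v) v := by
    simpa using (hasDerivAt_pow 2 v)
  have dsq1 : HasDerivAt (fun x : ℝ => x^2 - 1) (2*v) v := dsq.sub_const 1
  have dl1 : HasDerivAt (fun x : ℝ => Real.log (x^2)) (2*v/v^2) v :=
    dsq.log (ne_of_gt hv2)
  have dl2 : HasDerivAt (fun x : ℝ => Real.log (x^2 - 1)) (2*v/(v^2-1)) v :=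
    dsq1.log (ne_of_gt h1)
  have dL : HasDerivAt (fun x : ℝ => x * (Real.log (x^2) - Real.log (x^2-1)))
      (1 * (Real.log (v^2) - Real.log (v^2-1)) + v * (2*v/v^2 - 2*v/(v^2-1))) v :=
    (hasDerivAt_id v).mul (dl1.sub dl2)
  have heq : V =ᶠ[nhds v] (fun x : ℝ => x * (Real.log (x^2) - Real.log (x^2-1))) := by
    filter_upwards [eventually_gt_nhds hv] with x hx
    have : (0:ℝ) < x^2 - 1 := by nlinarith
    rw [V, Real.log_div (by positivity) (ne_of_gt this)]
  have := dL.congr_of_eventuallyEq heq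
  refine this.congr_deriv (Eq.symm ?_)
  rw [hV, Real.log_div (ne_of_gt hv2) (ne_of_gt h1)]
  field_simp
  ring



lemma deriv_V {v : ℝ} (hv : 1 < v) : deriv V v = -hV v := (hasDerivAt_V hv).deriv

lemma hV_nonneg {v : ℝ} (hv : 1 < v) : 0 ≤ hV v := by
  have h1 : (0:ℝ) < v^2 - 1 := by nlinarith
  have hlog : Real.log (v^2/(v^2-1)) ≤ v^2/(v^2-1) - 1 :=
    Real.log_le_sub_one_of_pos (by positivity)
  have : v^2/(v^2-1) - 1 = 1/(v^2-1) := by field_simp; ring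
  rw [hV]; rw [this] at hlog
  have : 1/(v^2-1) ≤ 2/(v^2-1) := by
    gcongr <;> norm_num
  linarith

lemma hV_le {v : ℝ} (hv : 1 < v) : hV v ≤ 2/(v^2-1) := by
  have h1 : (0:ℝ) < v^2 - 1 := by nlinarith
  have : (1:ℝ) ≤ v^2/(v^2-1) := by
    rw [le_div_iff₀ h1]; nlinarith
  have := Real.log_nonneg this
  rw [hV]; linarith

lemma contOn_hV : ContinuousOn hV (Ioi 1) := by
  have h : ∀ v ∈ Ioi (1:ℝ), (0:ℝ) < v^2 - 1 := by
    intro v hv; simp only [mem_Ioi] at hv; nlinarith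
  apply ContinuousOn.sub
  · exact continuousOn_const.div (by fun_prop) (fun v hv => ne_of_gt (h v hv))
  · apply ContinuousOn.log
    · apply ContinuousOn.div (by fun_prop) (by fun_prop) (fun v hv => ne_of_gt (h v hv))
    · intro v hv
      have := h v hv
      have hv2 : (0:ℝ) < v^2 := by simp only [mem_Ioi] at hv; nlinarith
      positivity

lemma integrableOn_g {p : ℝ} (hp : 1 < p) : IntegrableOn (fun v => hV v / v) (Ioi p) := by
  have hp0 : (0:ℝ) < p := by linarith
  have hc : (0:ℝ) < 1 - 1/p^2 := by
    have : 1/p^2 < 1 := by rw [div_lt_one (by positivity)]; nlinarith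
    linarith
  apply Integrable.mono' (g := fun v => (2/(1-1/p^2)) * v^(-3:ℝ))
  · exact (integrableOn_Ioi_rpow_of_lt (by norm_num) hp0).const_mul _
  · exact ((contOn_hV.mono (Ioi_subset_Ioi hp.le)).div (by fun_prop)
      (fun v hv => by simp only [mem_Ioi] at hv; intro h; rw [h] at hv; linarith)).aestronglyMeasurable
      measurableSet_Ioi
  · filter_upwards [ae_restrict_mem measurableSet_Ioi] with v hv
    simp only [mem_Ioi] at hv
    have hv1 : 1 < v := lt_trans hp hv
    have hv0 : (0:ℝ) < v := by linarith
    have h1 : (0:ℝ) < v^2 - 1 := by nlinarith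
    rw [Real.norm_eq_abs, abs_of_nonneg (div_nonneg (hV_nonneg hv1) hv0.le)]
    have key : hV v / v ≤ 2/((v^2-1)*v) := by
      rw [← div_div]
      gcongr
      exact hV_le hv1
    refine key.trans ?_
    rw [Real.rpow_neg hv0.le, show ((3:ℝ) = ((3:ℕ):ℝ)) by norm_num, Real.rpow_natCast v 3]
    have hlb : (1 - 1/p^2) * v^3 ≤ (v^2-1)*v := by
      have : v^2 * (1 - 1/p^2) ≤ v^2 - 1 := by
        have h2 : 1 ≤ v^2/p^2 := by
          rw [le_div_iff₀ (by positivity)]; nlinarith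
        have : v^2 * (1/p^2) = v^2/p^2 := by ring
        nlinarith [sq_nonneg v]
      nlinarith
    rw [← div_eq_mul_inv, div_div, div_le_div_iff₀ (by positivity) (by positivity)]
    nlinarith


noncomputable def W (t : ℝ) : ℝ := V t + Real.log ((t-1)/t)

lemma hasDerivAt_W {t : ℝ} (ht : 1 < t) :
    HasDerivAt W (-hV t + (1/(t-1) - 1/t)) t := by
  have h0 : (0:ℝ) < t := by linarith
  have h1 : (0:ℝ) < t - 1 := by linarith
  have dl : HasDerivAt (fun x : ℝ => Real.log (x-1) - Real.log x) (1/(t-1) - 1/t) t := by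
    have d1 : HasDerivAt (fun x : ℝ => Real.log (x-1)) (1/(t-1)) t := by
      have := ((hasDerivAt_id t).sub_const 1).log (ne_of_gt h1)
      simpa [one_div] using this
    have d2 : HasDerivAt Real.log (1/t) t := by
      simpa [one_div] using Real.hasDerivAt_log (ne_of_gt h0)
    exact d1.sub d2
  have dW : HasDerivAt (fun x => V x + (Real.log (x-1) - Real.log x))
      (-hV t + (1/(t-1) - 1/t)) t := (hasDerivAt_V ht).add dl
  apply dW.congr_of_eventuallyEq
  filter_upwards [eventually_gt_nhds ht] with x hx
  have hx1 : (0:ℝ) < x - 1 := by linarith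
  have hx0 : (0:ℝ) < x := by linarith
  rw [W, Real.log_div (ne_of_gt hx1) (ne_of_gt hx0)]

lemma hV_le' {t : ℝ} (ht : 1 < t) : hV t ≤ 1/(t-1) - 1/t := by
  have h0 : (0:ℝ) < t := by linarith
  have h1 : (0:ℝ) < t^2 - 1 := by nlinarith
  have hx : (0:ℝ) < (t^2-1)/t^2 := by positivity
  have hlog : Real.log ((t^2-1)/t^2) ≤ (t^2-1)/t^2 - 1 := Real.log_le_sub_one_of_pos hx
  have hinv : Real.log ((t^2-1)/t^2) = - Real.log (t^2/(t^2-1)) := by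
    rw [Real.log_div (ne_of_gt h1) (by positivity), Real.log_div (by positivity) (ne_of_gt h1)]
    ring
  rw [hinv] at hlog
  -- so log(t²/(t²-1)) ≥ 1 - (t²-1)/t² = 1/t²
  have hge : 1/t^2 ≤ Real.log (t^2/(t^2-1)) := by
    have : (t^2-1)/t^2 - 1 = -(1/t^2) := by field_simp; ring
    rw [this] at hlog; linarith
  rw [hV]
  have : 2/(t^2-1) - 1/t^2 ≤ 1/(t-1) - 1/t := by
    rw [div_sub_div _ _ (ne_of_gt (by linarith : (0:ℝ) < t - 1)) (ne_of_gt h0),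
      div_sub_div _ _ (ne_of_gt h1) (ne_of_gt (by positivity : (0:ℝ) < t^2)),
      div_le_div_iff₀ (by nlinarith) (by nlinarith)]
    nlinarith [mul_nonneg (sq_nonneg (t-1)) h0.le]
  linarith

lemma W_mono : MonotoneOn W (Ioi 1) := by
  apply monotoneOn_of_deriv_nonneg (convex_Ioi 1)
  · intro t ht
    exact ((hasDerivAt_W ht).differentiableAt.continuousAt).continuousWithinAt
  · intro t ht
    rw [interior_Ioi] at ht
    exact (hasDerivAt_W ht).differentiableAt.differentiableWithinAt
  · intro t ht
    rw [interior_Ioi] at ht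
    rw [(hasDerivAt_W ht).deriv]
    have := hV_le' ht
    linarith

lemma contAt_hV {s : ℝ} (hs : 1 < s) : ContinuousAt hV s :=
  contOn_hV.continuousAt (isOpen_Ioi.mem_nhds hs)

lemma contOn_g : ContinuousOn (fun v => hV v / v) (Ioi 1) :=
  contOn_hV.div (by fun_prop) (fun v hv => by
    simp only [mem_Ioi] at hv; intro h; rw [h] at hv; linarith)

lemma contAt_g {s : ℝ} (hs : 1 < s) : ContinuousAt (fun v => hV v / v) s :=
  contOn_g.continuousAt (isOpen_Ioi.mem_nhds hs)

theorem stmt_11 (p p' : ℝ) (hp : 1 < p) (hpp' : p < p') :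
    (Real.exp (V p - V p') - 1) / p - (Q p - Q p') ≥
      p * ((Real.exp (V p - V p') - 1) / p) - (V p - V p') ∧
    p * ((Real.exp (V p - V p') - 1) / p) - (V p - V p') ≥ 0 := by
  have hp0 : (0:ℝ) < p := by linarith
  have hp'1 : 1 < p' := lt_trans hp hpp'
  set A : ℝ → ℝ := fun s => ∫ v in p..s, hV v with hA_def
  set B : ℝ → ℝ := fun s => ∫ v in p..s, hV v / v with hB_def
  -- interval integrability on subintervals of (1, ∞)
  have hsub : ∀ s ∈ Icc p p', uIcc p s ⊆ Ioi 1 := by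
    intro s hs
    rw [uIcc_of_le hs.1]
    intro x hx
    exact lt_of_lt_of_le hp hx.1
  have hIntA : ∀ s ∈ Icc p p', IntervalIntegrable hV volume p s := fun s hs =>
    (contOn_hV.mono (hsub s hs)).intervalIntegrable
  have hIntB : ∀ s ∈ Icc p p', IntervalIntegrable (fun v => hV v / v) volume p s := fun s hs =>
    (contOn_g.mono (hsub s hs)).intervalIntegrable
  have hmemIoi : ∀ s ∈ Icc p p', 1 < s := fun s hs => lt_of_lt_of_le hp hs.1
  -- FTC-2 derivatives
  have hA' : ∀ s ∈ Icc p p', HasDerivAt A (hV s) s := by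
    intro s hs
    exact intervalIntegral.integral_hasDerivAt_right (hIntA s hs)
      (ContinuousOn.stronglyMeasurableAtFilter isOpen_Ioi contOn_hV s (hmemIoi s hs))
      (contAt_hV (hmemIoi s hs))
  have hB' : ∀ s ∈ Icc p p', HasDerivAt B (hV s / s) s := by
    intro s hs
    exact intervalIntegral.integral_hasDerivAt_right (hIntB s hs)
      (ContinuousOn.stronglyMeasurableAtFilter isOpen_Ioi contOn_g s (hmemIoi s hs))
      (contAt_g (hmemIoi s hs))
  -- A s = V p - V s
  have hAval : ∀ s ∈ Icc p p', A s = V p - V s := by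
    intro s hs
    have : (∫ v in p..s, -hV v) = V s - V p := by
      apply intervalIntegral.integral_eq_sub_of_hasDerivAt
      · intro x hx
        exact hasDerivAt_V (lt_of_lt_of_le hp (by rw [uIcc_of_le hs.1] at hx; exact hx.1))
      · exact (hIntA s hs).neg
    rw [intervalIntegral.integral_neg] at this
    have : A s = -(V s - V p) := by rw [hA_def]; simp only; linarith [this]
    linarith [this]
  -- B p' = Q p - Q p'
  have hQint : ∀ a : ℝ, 1 < a →
      (∫ v in Set.Ioi a, -(deriv V v) / v) = ∫ v in Set.Ioi a, hV v / v := by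
    intro a ha
    apply setIntegral_congr_fun measurableSet_Ioi
    intro v hv
    simp only [mem_Ioi] at hv
    simp only [deriv_V (lt_trans ha hv), neg_neg]
  have hBval : B p' = Q p - Q p' := by
    have hsplit : (∫ v in Set.Ioi p, hV v / v) =
        (∫ v in Set.Ioc p p', hV v / v) + ∫ v in Set.Ioi p', hV v / v := by
      rw [← setIntegral_union (Set.Ioc_disjoint_Ioi le_rfl) measurableSet_Ioi
        ((integrableOn_g hp).mono_set Set.Ioc_subset_Ioi_self) ((integrableOn_g hp).mono_set (Set.Ioi_subset_Ioi hpp'.le)),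
        Set.Ioc_union_Ioi_eq_Ioi hpp'.le]
    rw [Q, Q, hQint p hp, hQint p' hp'1, hB_def]
    simp only
    rw [intervalIntegral.integral_of_le hpp'.le]
    rw [hsplit]
    ring
  -- the key exponential bound from W-monotonicity
  have hkey : ∀ s ∈ Icc p p', Real.exp (A s) * (1 - 1/p) ≤ 1 - 1/s := by
    intro s hs
    have hs1 : 1 < s := hmemIoi s hs
    have hWm := W_mono (mem_Ioi.mpr hp) (mem_Ioi.mpr hs1) hs.1
    rw [W, W] at hWm
    have hAs : A s ≤ Real.log ((s-1)/s) - Real.log ((p-1)/p) := by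
      rw [hAval s hs]; linarith
    have hps : (0:ℝ) < (p-1)/p := div_pos (by linarith) hp0
    have hss : (0:ℝ) < (s-1)/s := by
      have : (0:ℝ) < s - 1 := by linarith
      positivity
    calc Real.exp (A s) * (1 - 1/p)
        ≤ Real.exp (Real.log ((s-1)/s) - Real.log ((p-1)/p)) * (1 - 1/p) := by
          apply mul_le_mul_of_nonneg_right (Real.exp_le_exp.mpr hAs)
          have : 1/p < 1 := by rw [div_lt_one hp0]; exact hp
          linarith
      _ = 1 - 1/s := by
          rw [Real.exp_sub, Real.exp_log hss, Real.exp_log hps]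
          have h1 : p - 1 ≠ 0 := by linarith
          have h2 : s ≠ 0 := by linarith
          have h3 : p ≠ 0 := by linarith
          field_simp
  -- G and its monotonicity
  set G : ℝ → ℝ := fun s => (Real.exp (A s) - 1) * (1/p - 1) + A s - B s with hG_def
  have hG' : ∀ s ∈ Icc p p',
      HasDerivAt G (Real.exp (A s) * hV s * (1/p - 1) + hV s - hV s / s) s := by
    intro s hs
    have d1 : HasDerivAt (fun u => Real.exp (A u)) (Real.exp (A s) * hV s) s :=
      (hA' s hs).exp
    exact (((d1.sub_const 1).mul_const (1/p - 1)).add (hA' s hs)).sub (hB' s hs)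
  have hGmono : MonotoneOn G (Icc p p') := by
    apply monotoneOn_of_deriv_nonneg (convex_Icc p p')
    · intro s hs
      exact ((hG' s hs).differentiableAt.continuousAt).continuousWithinAt
    · intro s hs
      rw [interior_Icc] at hs
      exact (hG' s (Ioo_subset_Icc_self hs)).differentiableAt.differentiableWithinAt
    · intro s hs
      rw [interior_Icc] at hs
      have hs' := Ioo_subset_Icc_self hs
      rw [(hG' s hs').deriv]
      have hs1 : 1 < s := hmemIoi s hs'
      have hh := hV_nonneg hs1
      have hk := hkey s hs'
      have hs0 : (0:ℝ) < s := by linarith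
      have : Real.exp (A s) * (1/p - 1) + 1 - 1/s ≥ 0 := by linarith [hk]
      have expand : Real.exp (A s) * hV s * (1/p - 1) + hV s - hV s / s
          = hV s * (Real.exp (A s) * (1/p - 1) + 1 - 1/s) := by
        field_simp
      rw [expand]
      positivity
  have hGp : G p = 0 := by
    rw [hG_def]
    simp [hA_def, hB_def, intervalIntegral.integral_same]
  have hGineq : 0 ≤ G p' :=
    hGp ▸ hGmono (left_mem_Icc.mpr hpp'.le) (right_mem_Icc.mpr hpp'.le) hpp'.le
  have hApval : A p' = V p - V p' := hAval p' (right_mem_Icc.mpr hpp'.le)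
  rw [hG_def] at hGineq
  simp only at hGineq
  rw [hApval, hBval] at hGineq
  have hcancel : p * ((Real.exp (V p - V p') - 1) / p) = Real.exp (V p - V p') - 1 := by
    field_simp
  constructor
  · rw [hcancel, ge_iff_le, div_eq_mul_inv, ← one_div]
    nlinarith [hGineq]
  · rw [hcancel]
    have := Real.add_one_le_exp (V p - V p')
    linarith
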